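/- Let α, β be real numbers with 2 < α < 3 and 3 < β < 4, and set p₋ = (β+1−√((β+1)(β−3)))/(2β) and p₊ = (β+1+√((β+1)(β−3)))/(2β). Assume the conditions (C5a) f_β((α−1)/α) = p₊, (C5b) f_α(p₋) = (α−1)/α, (C5c) f_α((β−1)/β) = p₋, (C5d) f_α(1/β) = p₋, and (C5e) f_α(p₊) = 1/β, and assume that the five points (α−1)/α, (β−1)/β, 1/β, p₋, p₊ are pairwise distinct. Then the bridging point B = 1/β is a periodic point of neither f_α nor f_β: for every integer n ≥ 1, the n-th iterate of f_α at 1/β differs from 1/β, and the n-th iterate of f_β at 1/β differs from 1/β. -/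

import Mathlib

/-- The logistic map `f_γ(x) = γ·x·(1−x)`. -/
def logistic (γ x : ℝ) : ℝ := γ * x * (1 - x)

/-- Under conditions (C5a)–(C5e) with `2 < α < 3`, `3 < β < 4`, and the five points
`(α−1)/α, (β−1)/β, 1/β, p₋, p₊` pairwise distinct, the bridging point `B = 1/β` is a
periodic point of neither `f_α` nor `f_β`: for every `n ≥ 1`,
`f_α^[n](1/β) ≠ 1/β` and `f_β^[n](1/β) ≠ 1/β`. -/
theorem logistic_IFS_five_point_bridging_point_not_periodic (α β : ℝ)
    (hα1 : 2 < α) (hα2 : α < 3) (hβ1 : 3 < β) (hβ2 : β < 4)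
    (pm pp : ℝ)
    (hpm : pm = (β + 1 - Real.sqrt ((β + 1) * (β - 3))) / (2 * β))
    (hpp : pp = (β + 1 + Real.sqrt ((β + 1) * (β - 3))) / (2 * β))
    (hC5a : logistic β ((α - 1) / α) = pp)
    (hC5b : logistic α pm = (α - 1) / α)
    (hC5c : logistic α ((β - 1) / β) = pm)
    (hC5d : logistic α (1 / β) = pm)
    (hC5e : logistic α pp = 1 / β)
    (hdist : List.Pairwise (· ≠ ·)
      [(α - 1) / α, (β - 1) / β, 1 / β, pm, pp]) :
    ∀ n : ℕ, 1 ≤ n →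
      (logistic α)^[n] (1 / β) ≠ 1 / β ∧ (logistic β)^[n] (1 / β) ≠ 1 / β := by
  have hα0 : α ≠ 0 := by linarith
  have hβ0 : β ≠ 0 := by linarith
  have hfixα : logistic α ((α - 1) / α) = (α - 1) / α := by
    unfold logistic; field_simp; ring
  have hfixβ : logistic β ((β - 1) / β) = (β - 1) / β := by
    unfold logistic; field_simp; ring
  have hfβ : logistic β (1 / β) = (β - 1) / β := by
    unfold logistic; field_simp
  simp only [List.pairwise_cons, List.mem_cons, List.not_mem_nil, List.mem_singleton,
    List.Pairwise.nil, forall_eq_or_imp, forall_eq] at hdist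
  obtain ⟨⟨hab, hac, ham, hap⟩, ⟨hbc, hbm, hbp⟩, ⟨hcm, hcp⟩, _⟩ := hdist
  have hαiter : ∀ n : ℕ, 2 ≤ n → (logistic α)^[n] (1 / β) = (α - 1) / α := by
    intro n hn
    induction n with
    | zero => omega
    | succ k ih =>
      rcases Nat.lt_or_ge k 2 with h | h
      · interval_cases k
        · omega
        · rw [show 1 + 1 = 2 from rfl, Function.iterate_succ_apply,
            Function.iterate_one, hC5d, hC5b]
      · rw [Function.iterate_succ_apply', ih h, hfixα]
  have hβiter : ∀ n : ℕ, 1 ≤ n → (logistic β)^[n] (1 / β) = (β - 1) / β := by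
    intro n hn
    induction n with
    | zero => omega
    | succ k ih =>
      rcases Nat.lt_or_ge k 1 with h | h
      · interval_cases k
        rw [show 0 + 1 = 1 from rfl, Function.iterate_one]; exact hfβ
      · rw [Function.iterate_succ_apply', ih h, hfixβ]
  intro n hn
  constructor
  · rcases Nat.lt_or_ge n 2 with h | h
    · interval_cases n
      rw [Function.iterate_one, hC5d]
      exact fun e => hcm e.symm
    · rw [hαiter n h]
      exact fun e => hac e
  · rw [hβiter n hn]
    exact fun e => hbc e
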